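/- (Theorem 1, direction 𝓢₀ ⊆ 𝓢_HT.) Let n > K ≥ 1 and L ≥ 1. Let z_1,…,z_K ∈ ℂ be pairwise distinct with |z_k| = 1, let b ∈ ℝ^K with b_k > 0, and let Φ ∈ ℂ^{K×L} with |Φ_{k,l}| = 1 for all k,l. Let X ∈ ℂ^{(2n−1)×L} have entries X_{j,l} = Σ_{k=1}^K b_k Φ_{k,l} z_k^{j−1}. Then there exists t ∈ ℂ^n, namely t_j = Σ_{k=1}^K b_k z_k^{j−1}, such that for every l = 1,…,L the block matrix 𝓜(X_{:,l}, t) is positive semidefinite and rank(𝓜(X_{:,l}, t)) = rank(𝓣t) ≤ K. -/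

import Mathlib

open Matrix
open scoped ComplexOrder

/-- The Hankel operator: maps `x ∈ ℂ^(2n-1)` to the `n × n` matrix with
`(𝓗x)_{i,j} = x_{i+j-1}` (1-based indexing). -/
noncomputable def hankelOp (n : ℕ) (x : Fin (2 * n - 1) → ℂ) :
    Matrix (Fin n) (Fin n) ℂ :=
  Matrix.of fun i j => x ⟨i.val + j.val, by have hi := i.isLt; have hj := j.isLt; omega⟩

/-- The Hermitian Toeplitz operator: maps `t ∈ ℂ^n` to the `n × n` matrix with
`(𝓣t)_{i,j} = t_{i-j+1}` for `i ≥ j` and `(𝓣t)_{i,j} = conj (t_{j-i+1})` for `i < j`. -/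
noncomputable def toeplitzOp (n : ℕ) (t : Fin n → ℂ) : Matrix (Fin n) (Fin n) ℂ :=
  Matrix.of fun i j =>
    if j.val ≤ i.val then t ⟨i.val - j.val, by have hi := i.isLt; omega⟩
    else star (t ⟨j.val - i.val, by have hj := j.isLt; omega⟩)

/-- The `2n × 2n` Hankel-Toeplitz block matrix `𝓜(x,t) = [[𝓣(conj t), 𝓗(conj x)],[𝓗x, 𝓣t]]`. -/
noncomputable def blockM (n : ℕ) (x : Fin (2 * n - 1) → ℂ) (t : Fin n → ℂ) :
    Matrix (Fin n ⊕ Fin n) (Fin n ⊕ Fin n) ℂ :=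
  Matrix.fromBlocks (toeplitzOp n fun j => star (t j)) (hankelOp n fun j => star (x j))
    (hankelOp n x) (toeplitzOp n t)

private lemma pow_key (u : ℂ) (hu : u * star u = 1) {i j : ℕ} (h : j ≤ i) :
    u ^ (i - j) = u ^ i * star u ^ j := by
  calc u ^ (i - j) = u ^ (i - j) * (u * star u) ^ j := by rw [hu, one_pow, mul_one]
    _ = (u ^ (i - j) * u ^ j) * star u ^ j := by rw [mul_pow]; ring
    _ = u ^ i * star u ^ j := by rw [← pow_add, Nat.sub_add_cancel h]

private lemma rank_rowselect_le {l m n' : Type*} [Fintype l] [Fintype m] [Fintype n']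
    [DecidableEq m] (A : Matrix m n' ℂ) (f : l → m) :
    (A.submatrix f id).rank ≤ A.rank := by
  have h : A.submatrix f id =
      (Matrix.of fun (k : l) (p : m) => if f k = p then (1 : ℂ) else 0) * A := by
    ext k j
    simp [Matrix.mul_apply, ite_mul, Finset.sum_ite_eq]
  rw [h]
  exact Matrix.rank_mul_le_right _ _

theorem S0_subset_SHT
    (n K L : ℕ) (hK : 1 ≤ K) (hKn : K < n) (hL : 1 ≤ L)
    (z : Fin K → ℂ) (hz : ∀ k, ‖z k‖ = 1)
    (hz' : Function.Injective z)
    (b : Fin K → ℝ) (hb : ∀ k, 0 < b k)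
    (Φ : Matrix (Fin K) (Fin L) ℂ) (hΦ : ∀ k l, ‖Φ k l‖ = 1)
    (X : Matrix (Fin (2 * n - 1)) (Fin L) ℂ)
    (hX : ∀ (j : Fin (2 * n - 1)) (l : Fin L),
      X j l = ∑ k : Fin K, (b k : ℂ) * Φ k l * z k ^ (j : ℕ)) :
    ∃ t : Fin n → ℂ,
      (∀ j : Fin n, t j = ∑ k : Fin K, (b k : ℂ) * z k ^ (j : ℕ)) ∧
      ∀ l : Fin L,
        (blockM n (fun j => X j l) t).PosSemidef ∧
        (blockM n (fun j => X j l) t).rank = (toeplitzOp n t).rank ∧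
        (toeplitzOp n t).rank ≤ K := by
  classical
  refine ⟨fun j => ∑ k : Fin K, (b k : ℂ) * z k ^ (j : ℕ), fun j => rfl, ?_⟩
  set t : Fin n → ℂ := fun j => ∑ k : Fin K, (b k : ℂ) * z k ^ (j : ℕ) with ht
  -- basic unimodularity facts
  have hzu : ∀ k, z k * star (z k) = 1 := by
    intro k
    have h := Complex.mul_conj (z k)
    rw [Complex.normSq_eq_norm_sq, hz k] at h
    simpa using h
  have hzu' : ∀ k, star (z k) * star (star (z k)) = 1 := by
    intro k; rw [star_star, mul_comm]; exact hzu k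
  have hΦu : ∀ k l, star (Φ k l) * Φ k l = 1 := by
    intro k l
    have h := Complex.mul_conj (Φ k l)
    rw [Complex.normSq_eq_norm_sq, hΦ k l] at h
    rw [mul_comm]; simpa using h
  -- square roots of b
  set s : Fin K → ℂ := fun k => ((Real.sqrt (b k) : ℝ) : ℂ) with hs
  have hss : ∀ k, s k * s k = (b k : ℂ) := by
    intro k
    rw [hs]
    rw [← Complex.ofReal_mul, Real.mul_self_sqrt (hb k).le]
  have hsstar : ∀ k, star (s k) = s k := by
    intro k; rw [hs]; exact Complex.conj_ofReal _
  set D : Matrix (Fin K) (Fin K) ℂ := Matrix.diagonal s with hD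
  set V : Matrix (Fin n) (Fin K) ℂ := Matrix.of fun i k => z k ^ (i : ℕ) with hV
  set A : Matrix (Fin n) (Fin K) ℂ := V * D with hAdef
  have hA : ∀ (i : Fin n) k, A i k = z k ^ (i : ℕ) * s k := by
    intro i k
    rw [hAdef, hD, Matrix.mul_diagonal, hV]
    rfl
  -- Toeplitz factorization
  have hT : toeplitzOp n t = A * Aᴴ := by
    ext i j
    rw [Matrix.mul_apply]
    have hterm : ∀ k, A i k * (Aᴴ) k j = (b k : ℂ) * (z k ^ (i : ℕ) * star (z k) ^ (j : ℕ)) := by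
      intro k
      rw [Matrix.conjTranspose_apply, hA, hA, StarMul.star_mul, hsstar, star_pow, ← hss k]
      ring
    rw [Finset.sum_congr rfl fun k _ => hterm k]
    show (if (j : ℕ) ≤ (i : ℕ) then t ⟨(i : ℕ) - (j : ℕ), _⟩ else star (t ⟨(j : ℕ) - (i : ℕ), _⟩)) = _
    split_ifs with h
    · rw [ht]
      refine Finset.sum_congr rfl fun k _ => ?_
      show (b k : ℂ) * z k ^ ((i : ℕ) - (j : ℕ)) = _
      rw [pow_key (z k) (hzu k) h]
    · rw [ht]
      push_cast
      rw [star_sum]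
      refine Finset.sum_congr rfl fun k _ => ?_
      show star ((b k : ℂ) * z k ^ ((j : ℕ) - (i : ℕ))) = _
      rw [star_mul', star_pow, pow_key (star (z k)) (hzu' k) (by omega : (i : ℕ) ≤ (j : ℕ)),
        star_star, Complex.star_def, Complex.conj_ofReal]
      ring
  have hdetD : IsUnit D.det := by
    rw [hD, Matrix.det_diagonal]
    refine isUnit_iff_ne_zero.mpr (Finset.prod_ne_zero_iff.mpr fun k _ => ?_)
    show ((Real.sqrt (b k) : ℝ) : ℂ) ≠ 0
    exact Complex.ofReal_ne_zero.mpr (Real.sqrt_ne_zero'.mpr (hb k))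
  set V' : Matrix (Fin K) (Fin K) ℂ := Matrix.of fun k' k => z k ^ (k' : ℕ) * s k with hV'
  have hdetV' : IsUnit V'.det := by
    have hfac : V' = (Matrix.vandermonde z)ᵀ * D := by
      ext k' k
      rw [hV', hD, Matrix.mul_diagonal]
      simp [Matrix.vandermonde]
    rw [hfac, Matrix.det_mul, Matrix.det_transpose, Matrix.det_vandermonde]
    refine (isUnit_iff_ne_zero.mpr ?_).mul hdetD
    refine Finset.prod_ne_zero_iff.mpr fun i _ => Finset.prod_ne_zero_iff.mpr fun j hj => ?_
    rw [sub_ne_zero]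
    exact fun hcon => absurd (hz' hcon) (Finset.mem_Ioi.mp hj).ne'
  have hV'rank : V'.rank = K := by
    rw [Matrix.rank_of_isUnit _ ((Matrix.isUnit_iff_isUnit_det _).mpr hdetV')]
    simp
  have hArank : A.rank = K := by
    refine le_antisymm (by simpa using A.rank_le_card_width) ?_
    have hsub : A.submatrix (Fin.castLE hKn.le) id = V' := by
      ext k' k
      rw [Matrix.submatrix_apply, hA, hV']
      simp
    calc (K : ℕ) = V'.rank := hV'rank.symm
      _ = (A.submatrix (Fin.castLE hKn.le) id).rank := by rw [hsub]
      _ ≤ A.rank := rank_rowselect_le _ _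
  have hTrank : (toeplitzOp n t).rank = K := by
    rw [hT, Matrix.rank_self_mul_conjTranspose, hArank]
  intro l
  -- block factorization
  set W : Matrix (Fin n ⊕ Fin n) (Fin K) ℂ := Matrix.of fun p k =>
    Sum.elim (fun i : Fin n => star (Φ k l) * star (z k) ^ (i : ℕ))
      (fun i : Fin n => z k ^ (i : ℕ)) p with hW
  set Bm : Matrix (Fin n ⊕ Fin n) (Fin K) ℂ := W * D with hBmdef
  have hBapp : ∀ p k, Bm p k = W p k * s k := by
    intro p k
    rw [hBmdef, hD, Matrix.mul_diagonal]
  have hpz : ∀ (k : Fin K) {i j : ℕ}, j ≤ i →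
      z k ^ (i - j) = z k ^ i * (starRingEnd ℂ) (z k) ^ j := by
    intro k i j h
    simpa [Complex.star_def] using pow_key (z k) (hzu k) h
  have hpz' : ∀ (k : Fin K) {i j : ℕ}, i ≤ j →
      (starRingEnd ℂ) (z k) ^ (j - i) = (starRingEnd ℂ) (z k) ^ j * z k ^ i := by
    intro k i j h
    have h2 := pow_key (star (z k)) (hzu' k) h
    rw [star_star] at h2
    simpa [Complex.star_def] using h2
  have hφ' : ∀ k, (starRingEnd ℂ) (Φ k l) * Φ k l = 1 := by
    intro k
    simpa [Complex.star_def] using hΦu k l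
  have hM : blockM n (fun j => X j l) t = Bm * Bmᴴ := by
    ext p q
    rw [Matrix.mul_apply]
    have hterm : ∀ k, Bm p k * (Bmᴴ) k q = (b k : ℂ) * (W p k * star (W q k)) := by
      intro k
      rw [Matrix.conjTranspose_apply, hBapp, hBapp, StarMul.star_mul, hsstar, ← hss k]
      ring
    rw [Finset.sum_congr rfl fun k _ => hterm k]
    have hWapp₁ : ∀ (i : Fin n) k, W (Sum.inl i) k = star (Φ k l) * star (z k) ^ (i : ℕ) := by
      intro i k; rfl
    have hWapp₂ : ∀ (i : Fin n) k, W (Sum.inr i) k = z k ^ (i : ℕ) := by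
      intro i k; rfl
    rcases p with i | i <;> rcases q with j | j
    · -- 𝓣(conj t) block
      show (if (j : ℕ) ≤ (i : ℕ) then star (t ⟨(i : ℕ) - (j : ℕ), _⟩)
          else star (star (t ⟨(j : ℕ) - (i : ℕ), _⟩))) = _
      split_ifs with h
      · rw [ht, star_sum]
        refine Finset.sum_congr rfl fun k _ => ?_
        show star ((b k : ℂ) * z k ^ ((i : ℕ) - (j : ℕ))) = _
        simp only [hWapp₁, Complex.star_def, _root_.map_mul, _root_.map_pow, Complex.conj_conj,
          Complex.conj_ofReal]
        rw [hpz' k h]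
        linear_combination (-(b k : ℂ) * (starRingEnd ℂ) (z k) ^ (i : ℕ) * z k ^ (j : ℕ)) *
          hφ' k
      · rw [star_star, ht]
        refine Finset.sum_congr rfl fun k _ => ?_
        show (b k : ℂ) * z k ^ ((j : ℕ) - (i : ℕ)) = _
        simp only [hWapp₁, Complex.star_def, _root_.map_mul, _root_.map_pow, Complex.conj_conj,
          Complex.conj_ofReal]
        rw [hpz k (by omega : (i : ℕ) ≤ (j : ℕ))]
        linear_combination (-(b k : ℂ) * z k ^ (j : ℕ) * (starRingEnd ℂ) (z k) ^ (i : ℕ)) *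
          hφ' k
    · -- 𝓗(conj x) block
      show star (X ⟨(i : ℕ) + (j : ℕ), _⟩ l) = _
      rw [hX, star_sum]
      refine Finset.sum_congr rfl fun k _ => ?_
      show star ((b k : ℂ) * Φ k l * z k ^ ((i : ℕ) + (j : ℕ))) = _
      simp only [hWapp₁, hWapp₂, Complex.star_def, _root_.map_mul, _root_.map_pow, Complex.conj_conj,
        Complex.conj_ofReal]
      rw [pow_add]
      ring
    · -- 𝓗x block
      show X ⟨(i : ℕ) + (j : ℕ), _⟩ l = _
      rw [hX]
      refine Finset.sum_congr rfl fun k _ => ?_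
      show (b k : ℂ) * Φ k l * z k ^ ((i : ℕ) + (j : ℕ)) = _
      simp only [hWapp₁, hWapp₂, Complex.star_def, _root_.map_mul, _root_.map_pow, Complex.conj_conj,
        Complex.conj_ofReal]
      rw [pow_add]
      ring
    · -- 𝓣t block
      show (if (j : ℕ) ≤ (i : ℕ) then t ⟨(i : ℕ) - (j : ℕ), _⟩
          else star (t ⟨(j : ℕ) - (i : ℕ), _⟩)) = _
      split_ifs with h
      · rw [ht]
        refine Finset.sum_congr rfl fun k _ => ?_
        show (b k : ℂ) * z k ^ ((i : ℕ) - (j : ℕ)) = _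
        simp only [hWapp₂, Complex.star_def, _root_.map_mul, _root_.map_pow]
        rw [hpz k h]
      · rw [ht, star_sum]
        refine Finset.sum_congr rfl fun k _ => ?_
        show star ((b k : ℂ) * z k ^ ((j : ℕ) - (i : ℕ))) = _
        simp only [hWapp₂, Complex.star_def, _root_.map_mul, _root_.map_pow, Complex.conj_ofReal]
        rw [hpz' k (by omega : (i : ℕ) ≤ (j : ℕ))]
        ring
  have hMrank : (blockM n (fun j => X j l) t).rank = K := by
    rw [hM, Matrix.rank_self_mul_conjTranspose]
    refine le_antisymm (by simpa using Bm.rank_le_card_width) ?_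
    have hsub : Bm.submatrix (Sum.inr ∘ Fin.castLE hKn.le) id = V' := by
      ext k' k
      rw [Matrix.submatrix_apply, Function.comp_apply, hBapp, hV']
      show z k ^ ((Fin.castLE hKn.le k' : Fin n) : ℕ) * s k = _
      simp
    calc (K : ℕ) = V'.rank := hV'rank.symm
      _ = (Bm.submatrix (Sum.inr ∘ Fin.castLE hKn.le) id).rank := by rw [hsub]
      _ ≤ Bm.rank := rank_rowselect_le _ _
  refine ⟨?_, ?_, ?_⟩
  · rw [hM]
    exact Matrix.posSemidef_self_mul_conjTranspose Bm
  · rw [hMrank, hTrank]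
  · rw [hTrank]
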